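/- Let γ1, γ2, γ3 be real numbers with 0 < γ1 < η < γ2 and γ3 > 0 satisfying G(γ1) = G(γ2) = G(−γ3) = α. Then there exists a unique quadruple (B1, B2, B3, b) ∈ ℝ³ × (0, ∞) satisfying: (i) (B1 η/(γ1−η)) e^{γ1 b} + (B2 η/(γ2−η)) e^{γ2 b} − (B3 η/(γ3+η)) e^{−γ3 b} + B1 e^{γ1 b} + B2 e^{γ2 b} + B3 e^{−γ3 b} + 1/η = 0; (ii) γ1 B1 e^{γ1 b} + γ2 B2 e^{γ2 b} − γ3 B3 e^{−γ3 b} = 1; (iii) γ1² B1 e^{γ1 b} + γ2² B2 e^{γ2 b} + γ3² B3 e^{−γ3 b} = 0; (iv) B1 + B2 + B3 = 0, if and only if μ + λ/η > 0. Moreover, when a solution exists it satisfies B1 > 0, B2 > 0 and B3 < 0. -/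

import Mathlib

set_option maxHeartbeats 2000000

/-- The system of equations (i)-(iv) for the harvesting problem. -/
def harvSys (η γ1 γ2 γ3 B1 B2 B3 b : ℝ) : Prop :=
  B1 * η / (γ1 - η) * Real.exp (γ1 * b) + B2 * η / (γ2 - η) * Real.exp (γ2 * b)
      - B3 * η / (γ3 + η) * Real.exp (-γ3 * b)
      + B1 * Real.exp (γ1 * b) + B2 * Real.exp (γ2 * b) + B3 * Real.exp (-γ3 * b)
      + 1 / η = 0 ∧
  γ1 * B1 * Real.exp (γ1 * b) + γ2 * B2 * Real.exp (γ2 * b)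
      - γ3 * B3 * Real.exp (-γ3 * b) = 1 ∧
  γ1 ^ 2 * B1 * Real.exp (γ1 * b) + γ2 ^ 2 * B2 * Real.exp (γ2 * b)
      + γ3 ^ 2 * B3 * Real.exp (-γ3 * b) = 0 ∧
  B1 + B2 + B3 = 0

private theorem aux_main (σ η γ1 γ2 γ3 : ℝ) (hσ : 0 < σ) (hη : 0 < η)
    (h1 : 0 < γ1) (h2 : γ1 < η) (h3 : η < γ2) (h4 : 0 < γ3) :
    ((∃! q : ℝ × ℝ × ℝ × ℝ, 0 < q.2.2.2 ∧ harvSys η γ1 γ2 γ3 q.1 q.2.1 q.2.2.1 q.2.2.2) ↔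
      0 < σ ^ 2 / 2 * (η - γ1 - γ2 + γ3) +
          (σ ^ 2 / 2 * (γ1 * γ3 + γ2 * γ3 - γ1 * γ2) - σ ^ 2 / 2 * (η - γ1 - γ2 + γ3) * η
            - σ ^ 2 * γ1 * γ2 * γ3 / (2 * η)) / η) ∧
    ∀ B1 B2 B3 b : ℝ, 0 < b → harvSys η γ1 γ2 γ3 B1 B2 B3 b →
      0 < B1 ∧ 0 < B2 ∧ B3 < 0 := by
  have hγ2 : 0 < γ2 := hη.trans h3
  have hσ0 : σ ≠ 0 := hσ.ne'
  have hη0 : η ≠ 0 := hη.ne'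
  have hγ10 : γ1 ≠ 0 := h1.ne'
  have hγ20 : γ2 ≠ 0 := hγ2.ne'
  have hγ30 : γ3 ≠ 0 := h4.ne'
  have h1η : γ1 - η ≠ 0 := sub_ne_zero.mpr h2.ne
  have h2η : γ2 - η ≠ 0 := sub_ne_zero.mpr h3.ne'
  have h3η : γ3 + η ≠ 0 := by positivity
  have h12 : γ1 - γ2 ≠ 0 := sub_ne_zero.mpr (h2.trans h3).ne
  have h21 : γ2 - γ1 ≠ 0 := sub_ne_zero.mpr (h2.trans h3).ne'
  have h13 : γ1 + γ3 ≠ 0 := by positivity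
  have h23 : γ2 + γ3 ≠ 0 := by positivity
  set X : ℝ := σ ^ 2 / 2 * (η - γ1 - γ2 + γ3) +
      (σ ^ 2 / 2 * (γ1 * γ3 + γ2 * γ3 - γ1 * γ2) - σ ^ 2 / 2 * (η - γ1 - γ2 + γ3) * η
        - σ ^ 2 * γ1 * γ2 * γ3 / (2 * η)) / η with hXdef
  have hApos : 0 < σ ^ 2 * γ1 * γ2 * γ3 / (2 * η) := by positivity
  set A : ℝ := σ ^ 2 * γ1 * γ2 * γ3 / (2 * η) with hAdef
  set D1 : ℝ := 2 * A * (γ1 - η) / (σ ^ 2 * γ1 ^ 2 * ((γ1 - γ2) * (γ1 + γ3))) with hD1def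
  set D2 : ℝ := 2 * A * (γ2 - η) / (σ ^ 2 * γ2 ^ 2 * ((γ2 - γ1) * (γ2 + γ3))) with hD2def
  set D3 : ℝ := (-(2 * A)) * (γ3 + η) / (σ ^ 2 * γ3 ^ 2 * ((γ1 + γ3) * (γ2 + γ3))) with hD3def
  have hD1pos : 0 < D1 := by
    rw [hD1def]
    apply div_pos_of_neg_of_neg
    · apply mul_neg_of_pos_of_neg (by positivity)
      linarith
    · apply mul_neg_of_pos_of_neg (by positivity)
      apply mul_neg_of_neg_of_pos (by linarith) (by positivity)
  have hD2pos : 0 < D2 := by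
    rw [hD2def]
    apply div_pos
    · apply mul_pos (by positivity); linarith
    · apply mul_pos (by positivity)
      apply mul_pos (by linarith) (by positivity)
  have hD3neg : D3 < 0 := by
    rw [hD3def]
    apply div_neg_of_neg_of_pos
    · apply mul_neg_of_neg_of_pos (by linarith) (by positivity)
    · positivity
  -- D's solve the linear system
  have hd2 : γ1 * D1 + γ2 * D2 - γ3 * D3 = 1 := by
    rw [hD1def, hD2def, hD3def, hAdef]; field_simp; ring
  have hd3 : γ1 ^ 2 * D1 + γ2 ^ 2 * D2 + γ3 ^ 2 * D3 = 0 := by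
    rw [hD1def, hD2def, hD3def, hAdef]; field_simp; ring
  have hd1 : D1 * η / (γ1 - η) + D2 * η / (γ2 - η) - D3 * η / (γ3 + η)
      + D1 + D2 + D3 + 1 / η = 0 := by
    rw [hD1def, hD2def, hD3def, hAdef]; field_simp; ring
  have hXS : X = A * (D1 + D2 + D3) := by
    rw [hXdef, hD1def, hD2def, hD3def, hAdef]; field_simp; ring
  -- the function F
  set F : ℝ → ℝ := fun t => D1 * Real.exp (-(γ1 * t)) + D2 * Real.exp (-(γ2 * t))
      + D3 * Real.exp (γ3 * t) with hFdef
  have hFval : ∀ t, F t = D1 * Real.exp (-(γ1 * t)) + D2 * Real.exp (-(γ2 * t))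
      + D3 * Real.exp (γ3 * t) := fun t => by rw [hFdef]
  have hder : ∀ t, HasDerivAt F
      (-(γ1 * (D1 * Real.exp (-(γ1 * t)))) - γ2 * (D2 * Real.exp (-(γ2 * t)))
        + γ3 * (D3 * Real.exp (γ3 * t))) t := by
    intro t
    have k1 : HasDerivAt (fun t : ℝ => -(γ1 * t)) (-γ1) t := by
      simpa using (hasDerivAt_id t).const_mul (-γ1)
    have k2 : HasDerivAt (fun t : ℝ => -(γ2 * t)) (-γ2) t := by
      simpa using (hasDerivAt_id t).const_mul (-γ2)
    have k3 : HasDerivAt (fun t : ℝ => γ3 * t) γ3 t := by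
      simpa using (hasDerivAt_id t).const_mul γ3
    have := ((k1.exp.const_mul D1).add (k2.exp.const_mul D2)).add (k3.exp.const_mul D3)
    rw [hFdef]
    exact this.congr_deriv (by ring)
  have hanti : StrictAnti F := by
    apply strictAnti_of_hasDerivAt_neg hder
    intro t
    have p1 := mul_pos (mul_pos h1 hD1pos) (Real.exp_pos (-(γ1 * t)))
    have p2 := mul_pos (mul_pos hγ2 hD2pos) (Real.exp_pos (-(γ2 * t)))
    have p3 := mul_pos h4 (mul_pos (neg_pos.mpr hD3neg) (Real.exp_pos (γ3 * t)))
    nlinarith [p1, p2, p3]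
  have hF0 : F 0 = D1 + D2 + D3 := by rw [hFval]; simp
  -- forward direction of the equivalence
  have hforward : ∀ B1 B2 B3 b : ℝ, harvSys η γ1 γ2 γ3 B1 B2 B3 b →
      B1 = D1 * Real.exp (-(γ1 * b)) ∧ B2 = D2 * Real.exp (-(γ2 * b)) ∧
        B3 = D3 * Real.exp (γ3 * b) ∧ F b = 0 := by
    intro B1 B2 B3 b hsys
    obtain ⟨hi, hii, hiii, hiv⟩ := hsys
    simp only [neg_mul] at hi hii hiii
    have f2 : γ1 * (B1 * Real.exp (γ1 * b) - D1) + γ2 * (B2 * Real.exp (γ2 * b) - D2)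
        - γ3 * (B3 * Real.exp (-(γ3 * b)) - D3) = 0 := by linear_combination hii - hd2
    have f3 : γ1 ^ 2 * (B1 * Real.exp (γ1 * b) - D1) + γ2 ^ 2 * (B2 * Real.exp (γ2 * b) - D2)
        + γ3 ^ 2 * (B3 * Real.exp (-(γ3 * b)) - D3) = 0 := by linear_combination hiii - hd3
    have g0 : (B1 * Real.exp (γ1 * b) - D1) * η / (γ1 - η)
        + (B2 * Real.exp (γ2 * b) - D2) * η / (γ2 - η)
        - (B3 * Real.exp (-(γ3 * b)) - D3) * η / (γ3 + η)
        + (B1 * Real.exp (γ1 * b) - D1) + (B2 * Real.exp (γ2 * b) - D2)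
        + (B3 * Real.exp (-(γ3 * b)) - D3) = 0 := by linear_combination hi - hd1
    have g : (B1 * Real.exp (γ1 * b) - D1) * γ1 * ((γ2 - η) * (γ3 + η))
        + (B2 * Real.exp (γ2 * b) - D2) * γ2 * ((γ1 - η) * (γ3 + η))
        + (B3 * Real.exp (-(γ3 * b)) - D3) * γ3 * ((γ1 - η) * (γ2 - η)) = 0 := by
      field_simp at g0
      rw [mul_comm b γ2, mul_comm b γ3] at g0
      linear_combination g0
    have hu3 : γ3 * (γ1 + γ3) * (γ2 + γ3) * (B3 * Real.exp (-(γ3 * b)) - D3) = 0 := by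
      linear_combination (γ3 + η) * (f3 - γ1 * f2) + (g - (γ2 - η) * (γ3 + η) * f2)
    have h03 : B3 * Real.exp (-(γ3 * b)) - D3 = 0 := by
      rcases mul_eq_zero.mp hu3 with h | h
      · exact absurd h (by positivity)
      · exact h
    have hu2 : γ2 * (γ2 - γ1) * (B2 * Real.exp (γ2 * b) - D2) = 0 := by
      linear_combination f3 - γ1 * f2 - γ3 * (γ3 + γ1) * h03
    have h02 : B2 * Real.exp (γ2 * b) - D2 = 0 := by
      rcases mul_eq_zero.mp hu2 with h | h
      · rcases mul_eq_zero.mp h with h' | h'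
        · exact absurd h' hγ20
        · exact absurd h' h21
      · exact h
    have h01 : B1 * Real.exp (γ1 * b) - D1 = 0 := by
      have hu1 : γ1 * (B1 * Real.exp (γ1 * b) - D1) = 0 := by
        linear_combination f2 - γ2 * h02 + γ3 * h03
      rcases mul_eq_zero.mp hu1 with h | h
      · exact absurd h hγ10
      · exact h
    have c1 : Real.exp (-(γ1 * b)) * Real.exp (γ1 * b) = 1 := by
      rw [← Real.exp_add]; norm_num
    have c2 : Real.exp (-(γ2 * b)) * Real.exp (γ2 * b) = 1 := by
      rw [← Real.exp_add]; norm_num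
    have c3 : Real.exp (γ3 * b) * Real.exp (-(γ3 * b)) = 1 := by
      rw [← Real.exp_add]; norm_num
    have hB1 : B1 = D1 * Real.exp (-(γ1 * b)) := by
      linear_combination Real.exp (-(γ1 * b)) * h01 - B1 * c1
    have hB2 : B2 = D2 * Real.exp (-(γ2 * b)) := by
      linear_combination Real.exp (-(γ2 * b)) * h02 - B2 * c2
    have hB3 : B3 = D3 * Real.exp (γ3 * b) := by
      linear_combination Real.exp (γ3 * b) * h03 - B3 * c3
    refine ⟨hB1, hB2, hB3, ?_⟩
    rw [hFval, ← hB1, ← hB2, ← hB3]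
    exact hiv
  -- backward direction
  have hbackward : ∀ b : ℝ, F b = 0 →
      harvSys η γ1 γ2 γ3 (D1 * Real.exp (-(γ1 * b))) (D2 * Real.exp (-(γ2 * b)))
        (D3 * Real.exp (γ3 * b)) b := by
    intro b hFb
    have c1 : Real.exp (-(γ1 * b)) * Real.exp (γ1 * b) = 1 := by
      rw [← Real.exp_add]; norm_num
    have c2 : Real.exp (-(γ2 * b)) * Real.exp (γ2 * b) = 1 := by
      rw [← Real.exp_add]; norm_num
    have c3 : Real.exp (γ3 * b) * Real.exp (-(γ3 * b)) = 1 := by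
      rw [← Real.exp_add]; norm_num
    rw [hFval] at hFb
    simp only [harvSys, neg_mul]
    refine ⟨?_, ?_, ?_, ?_⟩
    · linear_combination hd1 + (η / (γ1 - η) + 1) * D1 * c1 + (η / (γ2 - η) + 1) * D2 * c2
        + (-(η / (γ3 + η)) + 1) * D3 * c3
    · linear_combination hd2 + γ1 * D1 * c1 + γ2 * D2 * c2 - γ3 * D3 * c3
    · linear_combination hd3 + γ1 ^ 2 * D1 * c1 + γ2 ^ 2 * D2 * c2 + γ3 ^ 2 * D3 * c3
    · linear_combination hFb
  -- positivity transfer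
  have hXpos_iff : 0 < X ↔ 0 < D1 + D2 + D3 := by
    constructor
    · intro hX
      by_contra hcon
      push_neg at hcon
      have : A * (D1 + D2 + D3) ≤ 0 := mul_nonpos_of_nonneg_of_nonpos hApos.le hcon
      rw [← hXS] at this
      linarith
    · intro hS
      rw [hXS]
      exact mul_pos hApos hS
  constructor
  · constructor
    · rintro ⟨q, ⟨hqb, hqsys⟩, -⟩
      obtain ⟨-, -, -, hFq⟩ := hforward _ _ _ _ hqsys
      have := hanti hqb
      rw [hF0, hFq] at this
      exact hXpos_iff.mpr this
    · intro hX
      have hS : 0 < D1 + D2 + D3 := hXpos_iff.mp hX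
      -- find the root of F
      set T : ℝ := (D1 + D2) / ((-D3) * γ3) + 1 with hTdef
      have hTpos : 0 < T := by
        rw [hTdef]
        have : 0 < (D1 + D2) / ((-D3) * γ3) :=
          div_pos (by linarith) (mul_pos (by linarith) h4)
        linarith
      have hFT : F T < 0 := by
        have e1le : Real.exp (-(γ1 * T)) ≤ 1 :=
          Real.exp_le_one_iff.mpr (by nlinarith)
        have e2le : Real.exp (-(γ2 * T)) ≤ 1 :=
          Real.exp_le_one_iff.mpr (by nlinarith)
        have hexp : γ3 * T + 1 ≤ Real.exp (γ3 * T) := Real.add_one_le_exp _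
        have hTmul : (-D3) * (γ3 * T) = D1 + D2 + (-D3) * γ3 := by
          have hne : (-D3) * γ3 ≠ 0 := (mul_pos (neg_pos.2 hD3neg) h4).ne'
          have hcan : (D1 + D2) / ((-D3) * γ3) * ((-D3) * γ3) = D1 + D2 :=
            div_mul_cancel₀ _ hne
          rw [hTdef]
          linear_combination hcan
        have h31 : D3 * Real.exp (γ3 * T) ≤ D3 * (γ3 * T + 1) := by
          apply mul_le_mul_of_nonpos_left hexp hD3neg.le
        have h11 : D1 * Real.exp (-(γ1 * T)) ≤ D1 :=
          (mul_le_iff_le_one_right hD1pos).mpr e1le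
        have h21 : D2 * Real.exp (-(γ2 * T)) ≤ D2 :=
          (mul_le_iff_le_one_right hD2pos).mpr e2le
        have hD3γ3 : D3 * γ3 < 0 := mul_neg_of_neg_of_pos hD3neg h4
        rw [hFval]
        nlinarith [h31, h11, h21, hTmul, hD3γ3]
      have hF0pos : 0 < F 0 := by rw [hF0]; exact hS
      have hcont : Continuous F := by
        rw [hFdef]; fun_prop
      obtain ⟨b0, hb0mem, hFb0⟩ :=
        intermediate_value_Ioo' hTpos.le hcont.continuousOn ⟨hFT, hF0pos⟩
      refine ⟨(D1 * Real.exp (-(γ1 * b0)), D2 * Real.exp (-(γ2 * b0)),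
          D3 * Real.exp (γ3 * b0), b0), ⟨hb0mem.1, hbackward b0 hFb0⟩, ?_⟩
      rintro ⟨B1, B2, B3, b⟩ ⟨hb, hsys⟩
      obtain ⟨hB1, hB2, hB3, hFb⟩ := hforward _ _ _ _ hsys
      have hbb0 : b = b0 := hanti.injective (hFb.trans hFb0.symm)
      subst hbb0
      simp only [Prod.mk.injEq]
      exact ⟨hB1, hB2, hB3, trivial⟩
  · intro B1 B2 B3 b hb hsys
    obtain ⟨hB1, hB2, hB3, -⟩ := hforward _ _ _ _ hsys
    refine ⟨?_, ?_, ?_⟩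
    · rw [hB1]; exact mul_pos hD1pos (Real.exp_pos _)
    · rw [hB2]; exact mul_pos hD2pos (Real.exp_pos _)
    · rw [hB3]; exact mul_neg_of_neg_of_pos hD3neg (Real.exp_pos _)


/-- There exists a unique quadruple `(B1, B2, B3, b) ∈ ℝ³ × (0, ∞)` solving
(i)-(iv) if and only if `μ + λ/η > 0`; moreover any solution satisfies `B1 > 0`, `B2 > 0`,
`B3 < 0`. -/
theorem stmt_15 (σ μ lam η α : ℝ) (hσ : 0 < σ) (hlam : 0 < lam) (hη : 0 < η) (hα : 0 < α)
    (G : ℝ → ℝ)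
    (hG : ∀ γ : ℝ, γ ≠ η → G γ = 1 / 2 * σ ^ 2 * γ ^ 2 + μ * γ + lam * η / (η - γ) - lam)
    (γ1 γ2 γ3 : ℝ) (h1 : 0 < γ1) (h2 : γ1 < η) (h3 : η < γ2) (h4 : 0 < γ3)
    (e1 : G γ1 = α) (e2 : G γ2 = α) (e3 : G (-γ3) = α) :
    ((∃! q : ℝ × ℝ × ℝ × ℝ, 0 < q.2.2.2 ∧ harvSys η γ1 γ2 γ3 q.1 q.2.1 q.2.2.1 q.2.2.2) ↔
      0 < μ + lam / η) ∧
    ∀ B1 B2 B3 b : ℝ, 0 < b → harvSys η γ1 γ2 γ3 B1 B2 B3 b →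
      0 < B1 ∧ 0 < B2 ∧ B3 < 0 := by
  have hne1 : η - γ1 ≠ 0 := sub_ne_zero.mpr h2.ne'
  have hne2 : η - γ2 ≠ 0 := sub_ne_zero.mpr h3.ne
  have hne3 : η - (-γ3) ≠ 0 := by intro h; nlinarith [h4, hη]
  have H1 : 1 / 2 * σ ^ 2 * γ1 ^ 2 + μ * γ1 + lam * η / (η - γ1) - lam = α := by
    rw [← hG γ1 (by intro h; exact hne1 (by rw [h]; ring))]; exact e1
  have H2 : 1 / 2 * σ ^ 2 * γ2 ^ 2 + μ * γ2 + lam * η / (η - γ2) - lam = α := by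
    rw [← hG γ2 (by intro h; exact hne2 (by rw [h]; ring))]; exact e2
  have H3 : 1 / 2 * σ ^ 2 * (-γ3) ^ 2 + μ * (-γ3) + lam * η / (η - (-γ3)) - lam = α := by
    rw [← hG (-γ3) (by intro h; exact hne3 (by rw [h]; ring))]; exact e3
  have E1 : (σ^2/2 * γ1^2 + μ*γ1 - lam - α) * (η - γ1) + lam*η = 0 := by
    field_simp at H1; linear_combination H1/2
  have E2 : (σ^2/2 * γ2^2 + μ*γ2 - lam - α) * (η - γ2) + lam*η = 0 := by
    field_simp at H2; linear_combination H2/2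
  have E3 : (σ^2/2 * γ3^2 - μ*γ3 - lam - α) * (η + γ3) + lam*η = 0 := by
    field_simp at H3; linear_combination H3/2
  have d12 : γ1 - γ2 ≠ 0 := sub_ne_zero.mpr (by linarith)
  have d13 : γ1 - (-γ3) ≠ 0 := sub_ne_zero.mpr (by intro h; nlinarith)
  have d23 : γ2 - (-γ3) ≠ 0 := sub_ne_zero.mpr (by intro h; nlinarith)
  have h12 : -(σ^2/2)*(γ1^2+γ1*γ2+γ2^2) + (σ^2*η/2-μ)*(γ1+γ2) + (μ*η+lam+α) = 0 := by
    apply mul_left_cancel₀ d12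
    linear_combination E1 - E2
  have h13 : -(σ^2/2)*(γ1^2+γ1*(-γ3)+γ3^2) + (σ^2*η/2-μ)*(γ1+(-γ3)) + (μ*η+lam+α) = 0 := by
    apply mul_left_cancel₀ d13
    linear_combination E1 - E3
  have hA : σ^2/2*(γ1+γ2+(-γ3)) = σ^2*η/2 - μ := by
    apply mul_left_cancel₀ d23
    linear_combination h13 - h12
  have hB : σ^2/2*(γ1*γ2 + γ1*(-γ3) + γ2*(-γ3)) = -(μ*η + lam + α) := by
    linear_combination h12 + (γ1+γ2)*hA
  have hC : σ^2/2*(γ1*γ2*(-γ3)) = -(α*η) := by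
    linear_combination (-1)*E1 - γ1^2*hA + γ1*hB
  have hμv : μ = σ ^ 2 / 2 * (η - γ1 - γ2 + γ3) := by linear_combination hA
  have hαv : α = σ ^ 2 * γ1 * γ2 * γ3 / (2 * η) := by
    have hη0 : η ≠ 0 := hη.ne'
    field_simp
    linear_combination 2*hC
  have hlamv : lam = σ ^ 2 / 2 * (γ1 * γ3 + γ2 * γ3 - γ1 * γ2) - μ * η - α := by
    linear_combination hB
  subst hlamv
  subst hμv
  subst hαv
  exact aux_main σ η γ1 γ2 γ3 hσ hη h1 h2 h3 h4
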